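/- Let g : (0,1) → (0,1) be strictly decreasing and surjective, let S ⊆ (0,1) be a set of Lebesgue measure 1, and let T ⊆ (0,1) be a finite set. Suppose g is differentiable with derivative zero at every point of S ∖ T. Then g((0,1) ∖ S) has Lebesgue measure 1. -/

import Mathlib

open MeasureTheory

/-- If `g : (0,1) → (0,1)` is strictly decreasing and surjective, `S ⊆ (0,1)`
has Lebesgue measure `1`, `T ⊆ (0,1)` is finite, and `g` is differentiable with derivative
zero at every point of `S \ T`, then `g((0,1) \ S)` has Lebesgue measure `1`. -/
theorem statement11 (g : ℝ → ℝ)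
    (hanti : StrictAntiOn g (Set.Ioo 0 1))
    (hmaps : Set.MapsTo g (Set.Ioo 0 1) (Set.Ioo 0 1))
    (hsurj : Set.SurjOn g (Set.Ioo 0 1) (Set.Ioo 0 1))
    (S : Set ℝ) (hS : S ⊆ Set.Ioo 0 1) (hSvol : volume S = 1)
    (T : Set ℝ) (hT : T ⊆ Set.Ioo 0 1) (hTfin : T.Finite)
    (hderiv : ∀ x ∈ S \ T, HasDerivAt g 0 x) :
    volume (g '' (Set.Ioo 0 1 \ S)) = 1 := by
  have hST : volume (g '' (S \ T)) = 0 := by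
    apply addHaar_image_eq_zero_of_det_fderivWithin_eq_zero volume
      (f' := fun _ => (0 : ℝ →L[ℝ] ℝ))
    · intro x hx
      exact ((hderiv x hx).hasFDerivAt.congr_fderiv (by ext; simp)).hasFDerivWithinAt
    · intro x _
      simp [ContinuousLinearMap.det]
  have hTim : volume (g '' T) = 0 := (hTfin.image g).measure_zero _
  have hle : volume (g '' (Set.Ioo 0 1 \ S)) ≤ 1 := by
    calc volume (g '' (Set.Ioo 0 1 \ S)) ≤ volume (Set.Ioo (0:ℝ) 1) := by
          apply measure_mono
          rintro y ⟨x, hx, rfl⟩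
          exact hmaps hx.1
      _ = 1 := by simp
  have hge : (1 : ENNReal) ≤ volume (g '' (Set.Ioo 0 1 \ S)) := by
    have hsub : Set.Ioo (0:ℝ) 1 ⊆ g '' (Set.Ioo 0 1 \ S) ∪ (g '' (S \ T) ∪ g '' T) := by
      intro y hy
      obtain ⟨x, hx, rfl⟩ := hsurj hy
      by_cases hxS : x ∈ S
      · by_cases hxT : x ∈ T
        · exact Or.inr (Or.inr ⟨x, hxT, rfl⟩)
        · exact Or.inr (Or.inl ⟨x, ⟨hxS, hxT⟩, rfl⟩)
      · exact Or.inl ⟨x, ⟨hx, hxS⟩, rfl⟩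
    calc (1 : ENNReal) = volume (Set.Ioo (0:ℝ) 1) := by simp
      _ ≤ volume (g '' (Set.Ioo 0 1 \ S) ∪ (g '' (S \ T) ∪ g '' T)) := measure_mono hsub
      _ ≤ volume (g '' (Set.Ioo 0 1 \ S)) + volume (g '' (S \ T) ∪ g '' T) := measure_union_le _ _
      _ ≤ volume (g '' (Set.Ioo 0 1 \ S)) + (volume (g '' (S \ T)) + volume (g '' T)) :=
          add_le_add_right (measure_union_le _ _) _
      _ = volume (g '' (Set.Ioo 0 1 \ S)) := by rw [hST, hTim]; simp
  exact le_antisymm hle hge
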